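/- Let A : 𝓑 → ℝ be continuous and let m(A) = sup{ ∫ A dμ : μ a σ-invariant Borel probability measure on 𝓑 }. Then m(A) = inf_{f} sup_{(a,x) ∈ M × 𝓑} [ A(ax) + f(ax) − f(x) ], where the infimum is taken over all continuous functions f : 𝓑 → ℝ. -/

import Mathlib

open MeasureTheory Filter Topology

noncomputable section

instance : Fact (0 < 2 * Real.pi) := ⟨by positivity⟩

/-- The circle `M = ℝ/2πℤ` with arc-length metric. -/
abbrev Circ : Type := AddCircle (2 * Real.pi)

/-- The normalized Haar (Lebesgue) probability measure on the circle. -/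
def haarC : Measure Circ := AddCircle.haarAddCircle

/-- The Bernoulli space `𝓑 = M^ℕ`. -/
abbrev Bs : Type := ℕ → Circ

/-- The left shift `σ`. -/
def shift (x : Bs) : Bs := fun n => x (n + 1)

/-- Prepending a symbol: `cons a x = ax = (a, x₀, x₁, …)`. -/
def cons (a : Circ) (x : Bs) : Bs := fun n =>
  match n with
  | 0 => a
  | k + 1 => x k

/-- The metric `d(x,y) = Σ_k 2^{-k} d_M(x_k, y_k)` on `𝓑`. -/
def dB (x y : Bs) : ℝ := ∑' k : ℕ, (1 / 2 : ℝ) ^ k * dist (x k) (y k)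

/-- `A` is α-Hölder with constant `H` for the metric `dB`. -/
def IsHolderB (α H : ℝ) (A : Bs → ℝ) : Prop := ∀ x y, |A x - A y| ≤ H * dB x y ^ α

/-- The Ruelle operator `L_A ψ (x) = ∫_M e^{A(ax)} ψ(ax) da`. -/
def Ruelle (A : Bs → ℝ) (ψ : Bs → ℝ) : Bs → ℝ :=
  fun x => ∫ a, Real.exp (A (cons a x)) * ψ (cons a x) ∂haarC

/-- `m(A)`: the supremum of `∫ A dμ` over all shift-invariant Borel probability
measures `μ` on `𝓑`. -/
def mval (A : Bs → ℝ) : ℝ :=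
  sSup {r : ℝ | ∃ μ : Measure Bs, IsProbabilityMeasure μ ∧ μ.map shift = μ ∧
    r = ∫ x, A x ∂μ}

/- ### Auxiliary material for the proof -/

namespace DualityAux

lemma cons_zero_shift (y : Bs) : cons (y 0) (shift y) = y := by
  funext n; cases n <;> rfl

lemma shift_cons (a : Circ) (x : Bs) : shift (cons a x) = x := rfl

lemma cons_surj : Function.Surjective (fun p : Circ × Bs => cons p.1 p.2) :=
  fun y => ⟨(y 0, shift y), cons_zero_shift y⟩

lemma continuous_shift : Continuous shift :=
  continuous_pi fun n => continuous_apply (n + 1)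

lemma measurable_shift : Measurable shift := continuous_shift.measurable

lemma continuous_cons2 : Continuous (fun p : Circ × Bs => cons p.1 p.2) := by
  apply continuous_pi
  intro n
  cases n with
  | zero => exact continuous_fst
  | succ k => exact (continuous_apply k).comp continuous_snd

lemma shift_iter_apply (k : ℕ) (x : Bs) (n : ℕ) : (shift^[k] x) n = x (n + k) := by
  induction k generalizing x with
  | zero => rfl
  | succ j ih =>
    rw [Function.iterate_succ_apply, ih (shift x)]
    simp [shift, Nat.add_assoc]

/-- Birkhoff sums. -/
def birk (A : Bs → ℝ) (n : ℕ) (x : Bs) : ℝ := ∑ k ∈ Finset.range n, A (shift^[k] x)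

lemma birk_continuous {A : Bs → ℝ} (hA : Continuous A) (n : ℕ) : Continuous (birk A n) :=
  continuous_finset_sum _ fun k _ => hA.comp (continuous_shift.iterate k)

lemma birk_shift (A : Bs → ℝ) (n : ℕ) (y : Bs) :
    birk A n (shift y) = birk A (n + 1) y - A y := by
  have h : birk A (n + 1) y
      = (∑ k ∈ Finset.range n, A (shift^[k + 1] y)) + A (shift^[0] y) :=
    Finset.sum_range_succ' (fun k => A (shift^[k] y)) n
  have h2 : birk A n (shift y) = ∑ k ∈ Finset.range n, A (shift^[k + 1] y) := by
    unfold birk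
    exact Finset.sum_congr rfl fun k _ => by rw [Function.iterate_succ_apply]
  rw [h2, h]
  simp

/-- The function `f_n = -(1/n) ∑_{j<n} S_j A`. -/
def fN (A : Bs → ℝ) (n : ℕ) (y : Bs) : ℝ := -(1 / n) * ∑ j ∈ Finset.range n, birk A j y

lemma fN_continuous {A : Bs → ℝ} (hA : Continuous A) (n : ℕ) : Continuous (fN A n) := by
  unfold fN
  exact continuous_const.mul (continuous_finset_sum _ fun j _ => birk_continuous hA j)

lemma fN_key {A : Bs → ℝ} {n : ℕ} (hn : 0 < n) (y : Bs) :
    A y + fN A n y - fN A n (shift y) = birk A n y / n := by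
  have hS : ∑ j ∈ Finset.range n, birk A j (shift y)
      = (∑ j ∈ Finset.range n, birk A j y) + birk A n y - n * A y := by
    have h1 : ∑ j ∈ Finset.range n, birk A j (shift y)
        = ∑ j ∈ Finset.range n, (birk A (j + 1) y - A y) :=
      Finset.sum_congr rfl fun j _ => birk_shift A j y
    have h2 : ∑ j ∈ Finset.range n, birk A (j + 1) y
        = (∑ j ∈ Finset.range n, birk A j y) + birk A n y := by
      have e1 := Finset.sum_range_succ' (fun j => birk A j y) n
      have e2 := Finset.sum_range_succ (fun j => birk A j y) n
      have e0 : birk A 0 y = 0 := by simp [birk]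
      simp only [e0, add_zero] at e1
      linarith [e1, e2]
    rw [h1, Finset.sum_sub_distrib, h2, Finset.sum_const, Finset.card_range]
    ring
  have hn' : (n : ℝ) ≠ 0 := Nat.cast_ne_zero.mpr hn.ne'
  unfold fN
  rw [hS]
  field_simp
  ring

/-- The `n`-periodic point built from the first `n` coordinates of `x`. -/
def per (n : ℕ) (x : Bs) : Bs := fun k => x (k % n)

lemma per_periodic {n : ℕ} (x : Bs) : shift^[n] (per n x) = per n x := by
  funext k
  simp [shift_iter_apply, per, Nat.add_mod_right]

lemma per_agree {n m k : ℕ} (x : Bs) (hkm : k + m ≤ n) :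
    ∀ i < m, (shift^[k] (per n x)) i = (shift^[k] x) i := by
  intro i hi
  have : i + k < n := by omega
  simp [shift_iter_apply, per, Nat.mod_eq_of_lt this]

/-- The empirical measure on the orbit of `z` of length `n`. -/
def pmeas (n : ℕ) (z : Bs) : Measure Bs :=
  (n : ENNReal)⁻¹ • ∑ k ∈ Finset.range n, Measure.dirac (shift^[k] z)

lemma pmeas_prob {n : ℕ} (hn : 0 < n) (z : Bs) : IsProbabilityMeasure (pmeas n z) := by
  constructor
  have hne : (n : ENNReal) ≠ 0 := by exact_mod_cast hn.ne'
  have h1 : (∑ k ∈ Finset.range n, Measure.dirac (shift^[k] z)) Set.univ = n := by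
    rw [Measure.coe_finset_sum, Finset.sum_apply]
    simp
  rw [pmeas, Measure.smul_apply, h1, smul_eq_mul, ENNReal.inv_mul_cancel hne (by simp)]

lemma map_finset_sum {ι : Type*} (s : Finset ι) (μ : ι → Measure Bs) :
    (∑ i ∈ s, μ i).map shift = ∑ i ∈ s, (μ i).map shift := by
  classical
  induction s using Finset.cons_induction with
  | empty => simp
  | cons a s ha ih =>
    rw [Finset.sum_cons, Finset.sum_cons, Measure.map_add _ _ measurable_shift, ih]

lemma pmeas_invariant {n : ℕ} (hn : 0 < n) {z : Bs} (hz : shift^[n] z = z) :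
    (pmeas n z).map shift = pmeas n z := by
  obtain ⟨m, rfl⟩ : ∃ m, n = m + 1 := ⟨n - 1, by omega⟩
  unfold pmeas
  rw [Measure.map_smul, map_finset_sum]
  congr 1
  have hd : ∀ k, (Measure.dirac (shift^[k] z)).map shift = Measure.dirac (shift^[k + 1] z) := by
    intro k
    rw [Measure.map_dirac' measurable_shift, ← Function.iterate_succ_apply' shift k z]
  have c1 : ∑ k ∈ Finset.range (m + 1), (Measure.dirac (shift^[k] z)).map shift
      = ∑ k ∈ Finset.range (m + 1), Measure.dirac (shift^[k + 1] z) :=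
    Finset.sum_congr rfl fun k _ => hd k
  have c2 : ∑ k ∈ Finset.range (m + 1), Measure.dirac (shift^[k + 1] z)
      = ∑ k ∈ Finset.range m, Measure.dirac (shift^[k + 1] z)
        + Measure.dirac (shift^[m + 1] z) :=
    Finset.sum_range_succ _ m
  have c3 : Measure.dirac (shift^[m + 1] z) = Measure.dirac (shift^[0] z) := by
    rw [hz, Function.iterate_zero_apply]
  have c4 : ∑ k ∈ Finset.range m, Measure.dirac (shift^[k + 1] z)
        + Measure.dirac (shift^[0] z)
      = ∑ k ∈ Finset.range (m + 1), Measure.dirac (shift^[k] z) :=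
    (Finset.sum_range_succ' (fun k => Measure.dirac (shift^[k] z)) m).symm
  rw [c1, c2, c3, c4]

lemma integrable_of_continuous {g : Bs → ℝ} (hg : Continuous g) (μ : Measure Bs)
    [IsFiniteMeasure μ] : Integrable g μ :=
  hg.integrable_of_hasCompactSupport (HasCompactSupport.of_compactSpace g)

lemma integral_pmeas {A : Bs → ℝ} (hA : Continuous A) {n : ℕ} (hn : 0 < n) (z : Bs) :
    ∫ x, A x ∂(pmeas n z) = birk A n z / n := by
  unfold pmeas
  rw [integral_smul_measure,
    integral_finset_sum_measure (fun k _ => integrable_of_continuous hA _)]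
  have : ∀ k ∈ Finset.range n, ∫ x, A x ∂(Measure.dirac (shift^[k] z)) = A (shift^[k] z) :=
    fun k _ => integral_dirac' A _ hA.stronglyMeasurable
  rw [Finset.sum_congr rfl this]
  simp [birk, ENNReal.toReal_inv, smul_eq_mul, div_eq_inv_mul]

/-- Uniform continuity in terms of agreement of finitely many coordinates. -/
lemma exists_coord_control {A : Bs → ℝ} (hA : Continuous A) {ε : ℝ} (hε : 0 < ε) :
    ∃ m : ℕ, ∀ x y : Bs, (∀ i < m, x i = y i) → |A x - A y| ≤ ε := by
  have hu : UniformContinuous A := CompactSpace.uniformContinuous_of_continuous hA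
  have hU : {p : ℝ × ℝ | dist p.1 p.2 < ε} ∈ uniformity ℝ := Metric.dist_mem_uniformity hε
  have hV : (fun p : Bs × Bs => (A p.1, A p.2)) ⁻¹' {p : ℝ × ℝ | dist p.1 p.2 < ε}
      ∈ uniformity Bs := hu hU
  rw [Pi.uniformity, Filter.mem_iInf] at hV
  obtain ⟨I, hIfin, W, hW, hVeq⟩ := hV
  obtain ⟨b, hb⟩ := hIfin.bddAbove
  refine ⟨b + 1, fun x y hxy => ?_⟩
  have hmem : (x, y) ∈ ⋂ i : I, W i := by
    refine Set.mem_iInter.2 fun i => ?_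
    have hWi := hW i
    rw [Filter.mem_comap] at hWi
    obtain ⟨T, hT, hsub⟩ := hWi
    apply hsub
    have hieq : x (i : ℕ) = y (i : ℕ) := hxy _ (Nat.lt_succ_of_le (hb i.2))
    show ((x, y).1 (i : ℕ), (x, y).2 (i : ℕ)) ∈ T
    rw [show (x, y).2 (i : ℕ) = (x, y).1 (i : ℕ) from hieq.symm]
    exact refl_mem_uniformity hT
  rw [← hVeq] at hmem
  have : dist (A x) (A y) < ε := hmem
  rw [Real.dist_eq] at this
  exact this.le

lemma bddAbove_range_of_continuous {X : Type*} [TopologicalSpace X] [CompactSpace X]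
    {g : X → ℝ} (hg : Continuous g) : BddAbove (Set.range g) :=
  (isCompact_range hg).bddAbove

lemma iSup_cons_eq (g : Bs → ℝ) :
    ⨆ p : Circ × Bs, g (cons p.1 p.2) = ⨆ y : Bs, g y := by
  rw [iSup, iSup]
  congr 1
  exact cons_surj.range_comp g

/-- The main integral identity: for shift-invariant probability measures,
`∫ (A + f - f∘σ) = ∫ A`. -/
lemma integral_coboundary {A f : Bs → ℝ} (hA : Continuous A) (hf : Continuous f)
    {μ : Measure Bs} (hμp : IsProbabilityMeasure μ) (hμi : μ.map shift = μ) :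
    ∫ y, (A y + f y - f (shift y)) ∂μ = ∫ y, A y ∂μ := by
  have hint_A : Integrable A μ := integrable_of_continuous hA μ
  have hint_f : Integrable f μ := integrable_of_continuous hf μ
  have hint_fs : Integrable (fun y => f (shift y)) μ :=
    integrable_of_continuous (hf.comp continuous_shift) μ
  have hmap : ∫ y, f (shift y) ∂μ = ∫ y, f y ∂μ := by
    have := integral_map (μ := μ) measurable_shift.aemeasurable
      (f := f) (by rw [hμi]; exact hf.aestronglyMeasurable)
    rw [hμi] at this
    exact this.symm
  have e1 : ∫ y, (A y + f y - f (shift y)) ∂μ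
      = ∫ y, (A y + f y) ∂μ - ∫ y, f (shift y) ∂μ :=
    integral_sub (hint_A.add hint_f) hint_fs
  have e2 : ∫ y, (A y + f y) ∂μ = ∫ y, A y ∂μ + ∫ y, f y ∂μ :=
    integral_add hint_A hint_f
  rw [e1, e2, hmap]
  ring

end DualityAux

open DualityAux

/-- the duality formula
`m(A) = inf_{f continuous} sup_{(a,x)} [A(ax) + f(ax) − f(x)]`. -/
theorem duality_formula (A : Bs → ℝ) (hA : Continuous A) :
    mval A = sInf {r : ℝ | ∃ f : Bs → ℝ, Continuous f ∧
      r = ⨆ p : Circ × Bs, (A (cons p.1 p.2) + f (cons p.1 p.2) - f p.2)} := by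
  classical
  set Sμ : Set ℝ := {r : ℝ | ∃ μ : Measure Bs, IsProbabilityMeasure μ ∧ μ.map shift = μ ∧
    r = ∫ x, A x ∂μ} with hSμ
  set Sf : Set ℝ := {r : ℝ | ∃ f : Bs → ℝ, Continuous f ∧
    r = ⨆ p : Circ × Bs, (A (cons p.1 p.2) + f (cons p.1 p.2) - f p.2)} with hSf
  -- Sμ is nonempty: dirac measure at a fixed point.
  have hz0 : shift (fun _ => (0 : Circ)) = (fun _ => (0 : Circ)) := rfl
  have hSμ_ne : Sμ.Nonempty := by
    refine ⟨A (fun _ => (0 : Circ)), Measure.dirac (fun _ => (0 : Circ)), inferInstance, ?_, ?_⟩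
    · rw [Measure.map_dirac' measurable_shift, hz0]
    · exact (integral_dirac' A _ hA.stronglyMeasurable).symm
  -- Sf is nonempty: f = 0.
  have hSf_ne : Sf.Nonempty := ⟨_, 0, continuous_const, rfl⟩
  -- Every element of Sμ is ≤ every element of Sf.
  have hkey : ∀ s ∈ Sμ, ∀ r ∈ Sf, s ≤ r := by
    rintro s ⟨μ, hμp, hμi, rfl⟩ r ⟨f, hf, rfl⟩
    set F : Circ × Bs → ℝ := fun p => A (cons p.1 p.2) + f (cons p.1 p.2) - f p.2 with hF
    have hFc : Continuous F := by
      apply Continuous.sub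
      · exact ((hA.comp continuous_cons2).add (hf.comp continuous_cons2))
      · exact hf.comp continuous_snd
    have hFbdd : BddAbove (Set.range F) := bddAbove_range_of_continuous hFc
    have hpt : ∀ y : Bs, A y + f y - f (shift y) ≤ ⨆ p, F p := by
      intro y
      have : F (y 0, shift y) = A y + f y - f (shift y) := by
        simp only [hF, cons_zero_shift]
      rw [← this]
      exact le_ciSup hFbdd _
    have := integral_coboundary hA hf hμp hμi
    rw [← this]
    calc ∫ y, (A y + f y - f (shift y)) ∂μ
        ≤ ∫ _y, (⨆ p, F p) ∂μ := by
          apply integral_mono _ (integrable_const _) hpt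
          exact integrable_of_continuous
            ((hA.add hf).sub (hf.comp continuous_shift)) μ
      _ = ⨆ p, F p := by simp
  have hSμ_bdd : BddAbove Sμ := by
    obtain ⟨r, hr⟩ := hSf_ne
    exact ⟨r, fun s hs => hkey s hs r hr⟩
  have hSf_bdd : BddBelow Sf := by
    obtain ⟨s, hs⟩ := hSμ_ne
    exact ⟨s, fun r hr => hkey s hs r hr⟩
  -- Easy direction: mval A ≤ sInf Sf.
  have easy : mval A ≤ sInf Sf := by
    apply le_csInf hSf_ne
    intro r hr
    exact csSup_le hSμ_ne fun s hs => hkey s hs r hr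
  -- Hard direction.
  have hard : sInf Sf ≤ mval A := by
    refine le_of_forall_pos_le_add fun ε hε => ?_
    obtain ⟨m, hm⟩ := exists_coord_control hA (half_pos hε)
    -- bound on |A|
    obtain ⟨C, hC⟩ : ∃ C : ℝ, ∀ y : Bs, |A y| ≤ C := by
      obtain ⟨C, hC⟩ := bddAbove_range_of_continuous (hA.abs)
      exact ⟨C, fun y => hC ⟨y, rfl⟩⟩
    have hC0 : 0 ≤ C := le_trans (abs_nonneg _) (hC (fun _ => (0 : Circ)))
    -- choose n large
    obtain ⟨n, hn⟩ := exists_nat_gt (max 1 (2 * C * m / (ε / 2)))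
    have hnR : (0 : ℝ) < n := lt_trans one_pos (lt_of_le_of_lt (le_max_left _ _) hn)
    have hn1 : 0 < n := by exact_mod_cast hnR
    -- 2*C*m/n ≤ ε/2
    have hterm : 2 * C * m / n ≤ ε / 2 := by
      rw [div_le_iff₀ hnR]
      have h2 : 2 * C * m / (ε / 2) < n := lt_of_le_of_lt (le_max_right _ _) hn
      have := (div_lt_iff₀ (half_pos hε)).1 h2
      linarith [this]
    -- the maximizing point
    obtain ⟨x, -, hx⟩ := (isCompact_univ (X := Bs)).exists_isMaxOn
      Set.univ_nonempty ((birk_continuous hA n).continuousOn)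
    set z : Bs := per n x with hzdef
    -- the invariant measure
    have hμp : IsProbabilityMeasure (pmeas n z) := pmeas_prob hn1 z
    have hμi : (pmeas n z).map shift = pmeas n z := pmeas_invariant hn1 (per_periodic x)
    have hμint : ∫ y, A y ∂(pmeas n z) = birk A n z / n := integral_pmeas hA hn1 z
    have hμ_mem : birk A n z / n ∈ Sμ := ⟨pmeas n z, hμp, hμi, hμint.symm⟩
    have hμ_le : birk A n z / n ≤ mval A := le_csSup hSμ_bdd hμ_mem
    -- sInf Sf ≤ (⨆ y, birk A n y / n) via f = fN A n
    have hr_mem : (⨆ p : Circ × Bs,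
        (A (cons p.1 p.2) + fN A n (cons p.1 p.2) - fN A n p.2)) ∈ Sf :=
      ⟨fN A n, fN_continuous hA n, rfl⟩
    have hsup_eq : (⨆ p : Circ × Bs,
        (A (cons p.1 p.2) + fN A n (cons p.1 p.2) - fN A n p.2))
        = ⨆ y : Bs, birk A n y / n := by
      have h1 : ∀ p : Circ × Bs,
          A (cons p.1 p.2) + fN A n (cons p.1 p.2) - fN A n p.2
          = birk A n (cons p.1 p.2) / n := by
        intro p
        have := fN_key (A := A) hn1 (cons p.1 p.2)
        rwa [shift_cons] at this
      calc (⨆ p : Circ × Bs, (A (cons p.1 p.2) + fN A n (cons p.1 p.2) - fN A n p.2))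
          = ⨆ p : Circ × Bs, birk A n (cons p.1 p.2) / n := by
            exact congrArg _ (funext h1)
        _ = ⨆ y : Bs, birk A n y / n := iSup_cons_eq (fun y => birk A n y / n)
    -- sup of birk/n is at most birk A n x / n
    have hsup_le : (⨆ y : Bs, birk A n y / n) ≤ birk A n x / n := by
      apply ciSup_le
      intro y
      gcongr
      exact hx (Set.mem_univ y)
    -- comparison between birk A n x and birk A n z
    have hcomp : birk A n x ≤ birk A n z + n * (ε / 2) + 2 * C * m := by
      have hsplit : ∀ w : Bs, birk A n w
          = ∑ k ∈ Finset.range (n - m), A (shift^[k] w)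
            + ∑ k ∈ Finset.Ico (n - m) n, A (shift^[k] w) := by
        intro w
        rw [birk, Finset.range_eq_Ico,
          ← Finset.sum_Ico_consecutive _ (Nat.zero_le (n - m)) (Nat.sub_le n m),
          ← Finset.range_eq_Ico]
      have h1 : ∑ k ∈ Finset.range (n - m), (A (shift^[k] x) - A (shift^[k] z))
          ≤ (n - m : ℕ) * (ε / 2) := by
        have hb : ∀ k ∈ Finset.range (n - m),
            A (shift^[k] x) - A (shift^[k] z) ≤ ε / 2 := by
          intro k hk
          rw [Finset.mem_range] at hk
          have hkm : k + m ≤ n := by omega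
          have := hm (shift^[k] z) (shift^[k] x) (per_agree x hkm)
          have habs : |A (shift^[k] x) - A (shift^[k] z)| ≤ ε / 2 := by
            rwa [abs_sub_comm]
          exact le_trans (le_abs_self _) habs
        have := Finset.sum_le_card_nsmul (Finset.range (n - m)) _ (ε / 2) hb
        simpa [Finset.card_range, nsmul_eq_mul] using this
      have h2 : ∑ k ∈ Finset.Ico (n - m) n, (A (shift^[k] x) - A (shift^[k] z))
          ≤ m * (2 * C) := by
        have hcard : (Finset.Ico (n - m) n).card ≤ m := by
          rw [Nat.card_Ico]; omega
        calc ∑ k ∈ Finset.Ico (n - m) n, (A (shift^[k] x) - A (shift^[k] z))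
            ≤ (Finset.Ico (n - m) n).card • (2 * C) := by
              apply Finset.sum_le_card_nsmul
              intro k _
              have := abs_sub (A (shift^[k] x)) (A (shift^[k] z))
              calc A (shift^[k] x) - A (shift^[k] z)
                  ≤ |A (shift^[k] x) - A (shift^[k] z)| := le_abs_self _
                _ ≤ |A (shift^[k] x)| + |A (shift^[k] z)| := abs_sub _ _
                _ ≤ C + C := add_le_add (hC _) (hC _)
                _ = 2 * C := by ring
          _ ≤ m * (2 * C) := by
              rw [nsmul_eq_mul]
              apply mul_le_mul_of_nonneg_right _ (by positivity)
              exact_mod_cast hcard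
      have hle : birk A n x - birk A n z ≤ (n - m : ℕ) * (ε / 2) + m * (2 * C) := by
        rw [hsplit x, hsplit z]
        have : ∑ k ∈ Finset.range (n-m), A (shift^[k] x)
            - ∑ k ∈ Finset.range (n-m), A (shift^[k] z)
            = ∑ k ∈ Finset.range (n-m), (A (shift^[k] x) - A (shift^[k] z)) :=
          (Finset.sum_sub_distrib _ _).symm
        have h2' : ∑ k ∈ Finset.Ico (n-m) n, A (shift^[k] x)
            - ∑ k ∈ Finset.Ico (n-m) n, A (shift^[k] z)
            = ∑ k ∈ Finset.Ico (n-m) n, (A (shift^[k] x) - A (shift^[k] z)) :=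
          (Finset.sum_sub_distrib _ _).symm
        nlinarith [h1, h2, this, h2']
      have hnm : ((n - m : ℕ) : ℝ) ≤ (n : ℝ) := by exact_mod_cast Nat.sub_le n m
      nlinarith [hle, hnm, half_pos hε]
    -- put it together
    have hchain : sInf Sf ≤ birk A n x / n := by
      calc sInf Sf ≤ _ := csInf_le hSf_bdd hr_mem
        _ = ⨆ y : Bs, birk A n y / n := hsup_eq
        _ ≤ birk A n x / n := hsup_le
    have hfinal : birk A n x / n ≤ mval A + ε := by
      have hdiv : birk A n x / n ≤ birk A n z / n + ε / 2 + 2 * C * m / n := by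
        calc birk A n x / n ≤ (birk A n z + n * (ε / 2) + 2 * C * m) / n :=
              (div_le_div_iff_of_pos_right hnR).2 hcomp
          _ = birk A n z / n + ε / 2 + 2 * C * m / n := by
              field_simp
      linarith [hμ_le, hterm, hdiv]
    exact hchain.trans hfinal
  linarith [easy, hard]
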